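/- arXiv:2410.19831 — 2 statements merged into one kernel-verified Lean document; each statement's English description precedes it below -/
import Mathlib

section
/- Let x_0, …, x_n be the (n+1) distinct roots of the Laguerre polynomial L_{n+1}, and let w_0, …, w_n satisfy ∑_{k=0}^n w_k x_k^j = ∫₀^∞ e^{-x} x^j dx for j = 0, …, n. Then for every polynomial p of degree at most 2n+1, ∫₀^∞ e^{-x} p(x) dx = ∑_{k=0}^n w_k p(x_k). -/
open MeasureTheory Polynomial Set

/-- `exp (-t) * t ^ i` is integrable on `(0, ∞)`. -/
lemma integrableOn_exp_mul_pow (i : ℕ) :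
    IntegrableOn (fun t : ℝ => Real.exp (-t) * t ^ i) (Set.Ioi 0) := by
  have h := Real.GammaIntegral_convergent (s := (i + 1 : ℝ)) (by positivity)
  refine (integrableOn_congr_fun ?_ measurableSet_Ioi).mp h
  intro t ht
  simp [Real.rpow_natCast]

/-- The `i`-th moment of `exp (-t)` on `(0, ∞)` is `i!`. -/
lemma moment (i : ℕ) :
    ∫ t in Set.Ioi (0 : ℝ), Real.exp (-t) * t ^ i = i.factorial := by
  rw [← Real.Gamma_nat_eq_factorial, Real.Gamma_eq_integral (by positivity : (0:ℝ) < i + 1)]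
  refine setIntegral_congr_fun measurableSet_Ioi fun t ht => ?_
  rw [show ((i : ℝ) + 1) - 1 = (i : ℝ) by ring, Real.rpow_natCast]

lemma integrableOn_exp_mul_eval (p : Polynomial ℝ) :
    IntegrableOn (fun t : ℝ => Real.exp (-t) * p.eval t) (Set.Ioi 0) := by
  have h : (fun t : ℝ => Real.exp (-t) * p.eval t) =
      fun t => ∑ i ∈ Finset.range (p.natDegree + 1), p.coeff i * (Real.exp (-t) * t ^ i) := by
    funext t
    rw [Polynomial.eval_eq_sum_range, Finset.mul_sum]
    exact Finset.sum_congr rfl fun i _ => by ring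
  rw [h]
  exact integrable_finset_sum _ fun i _ => (integrableOn_exp_mul_pow i).const_mul _

/-- The linear functional `p ↦ ∫₀^∞ e^{-t} p(t) dt`. -/
noncomputable def phi (p : Polynomial ℝ) : ℝ :=
  ∫ t in Set.Ioi (0 : ℝ), Real.exp (-t) * p.eval t

lemma phi_eq_sum' {p : Polynomial ℝ} {N : ℕ} (h : p.natDegree < N) :
    phi p = ∑ i ∈ Finset.range N, p.coeff i * i.factorial := by
  unfold phi
  have h1 : ∀ t : ℝ, Real.exp (-t) * p.eval t =
      ∑ i ∈ Finset.range N, p.coeff i * (Real.exp (-t) * t ^ i) := by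
    intro t
    rw [Polynomial.eval_eq_sum_range' h, Finset.mul_sum]
    exact Finset.sum_congr rfl fun i _ => by ring
  rw [setIntegral_congr_fun measurableSet_Ioi fun t _ => h1 t,
    integral_finset_sum _ fun i _ => (integrableOn_exp_mul_pow i).const_mul _]
  exact Finset.sum_congr rfl fun i _ => by rw [integral_const_mul, moment]

lemma phi_zero : phi 0 = 0 := by simp [phi]

lemma phi_add (p q : Polynomial ℝ) : phi (p + q) = phi p + phi q := by
  unfold phi
  simp only [Polynomial.eval_add, mul_add]
  exact integral_add (integrableOn_exp_mul_eval p) (integrableOn_exp_mul_eval q)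

lemma phi_sub (p q : Polynomial ℝ) : phi (p - q) = phi p - phi q := by
  unfold phi
  simp only [Polynomial.eval_sub, mul_sub]
  exact integral_sub (integrableOn_exp_mul_eval p) (integrableOn_exp_mul_eval q)

lemma phi_monomial (i : ℕ) (a : ℝ) : phi (Polynomial.monomial i a) = a * i.factorial := by
  unfold phi
  have h1 : ∀ t : ℝ, Real.exp (-t) * (Polynomial.monomial i a).eval t =
      a * (Real.exp (-t) * t ^ i) := by
    intro t; rw [Polynomial.eval_monomial]; ring
  rw [setIntegral_congr_fun measurableSet_Ioi fun t _ => h1 t, integral_const_mul, moment]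

/-- Algebraic integration by parts: `∫ e^{-t} p'(t) = ∫ e^{-t} p(t) - p(0)`. -/
lemma phi_derivative (p : Polynomial ℝ) :
    phi (Polynomial.derivative p) = phi p - p.eval 0 := by
  induction p using Polynomial.induction_on' with
  | add p q hp hq =>
    rw [map_add, phi_add, phi_add, Polynomial.eval_add, hp, hq]; ring
  | monomial i a =>
    rw [Polynomial.derivative_monomial, phi_monomial, phi_monomial, Polynomial.eval_monomial]
    cases i with
    | zero => simp
    | succ j =>
      simp only [Nat.add_sub_cancel, Nat.factorial_succ, zero_pow (Nat.succ_ne_zero j)]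
      push_cast
      ring

/-- The polynomial sequence from the Rodrigues formula:
`Qs m k` satisfies `(d/dx)^k (x^m e^{-x}) = (Qs m k)(x) e^{-x}`. -/
noncomputable def Qs (m : ℕ) : ℕ → Polynomial ℝ
  | 0 => Polynomial.X ^ m
  | k + 1 => Polynomial.derivative (Qs m k) - Qs m k

lemma X_pow_dvd_Qs (m : ℕ) : ∀ k, k ≤ m → (Polynomial.X : Polynomial ℝ) ^ (m - k) ∣ Qs m k := by
  intro k
  induction k with
  | zero => intro _; simp [Qs]
  | succ k ih =>
    intro hk
    obtain ⟨s, hs⟩ := ih (le_of_lt (Nat.lt_of_succ_le hk))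
    have hmk : m - k = (m - (k + 1)) + 1 := by omega
    show (Polynomial.X : Polynomial ℝ) ^ (m - (k + 1)) ∣
      Polynomial.derivative (Qs m k) - Qs m k
    rw [hs, hmk, Polynomial.derivative_mul, Polynomial.derivative_X_pow]
    refine dvd_sub (dvd_add ?_ ?_) ?_
    · exact ⟨Polynomial.C ((m - (k + 1) + 1 : ℕ) : ℝ) * s, by rw [Nat.add_sub_cancel]; ring⟩
    · exact ⟨Polynomial.X * Polynomial.derivative s, by ring⟩
    · exact ⟨Polynomial.X * s, by ring⟩

lemma Qs_eval_zero (m k : ℕ) (hk : k < m) : (Qs m k).eval 0 = 0 := by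
  obtain ⟨s, hs⟩ := X_pow_dvd_Qs m k hk.le
  have hmk : m - k = (m - k - 1) + 1 := by omega
  rw [hs, hmk]
  simp [pow_succ]

/-- Key orthogonality: `∫ e^{-t} Qs m k (t) r(t) = 0` whenever `deg r < k ≤ m`. -/
lemma phi_Qs_mul (m : ℕ) : ∀ d k (r : Polynomial ℝ), d < k → k ≤ m → r.natDegree ≤ d →
    phi (Qs m k * r) = 0 := by
  intro d
  induction d with
  | zero =>
    intro k r hdk hkm hr
    obtain ⟨k, rfl⟩ := Nat.exists_eq_add_of_lt hdk
    rw [zero_add] at *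
    obtain ⟨c, rfl⟩ := Polynomial.natDegree_eq_zero.mp (Nat.le_zero.mp hr)
    show phi ((Polynomial.derivative (Qs m k) - Qs m k) * Polynomial.C c) = 0
    have hder : phi (Polynomial.derivative (Qs m k * Polynomial.C c)) =
        phi (Qs m k * Polynomial.C c) := by
      rw [phi_derivative, Polynomial.eval_mul, Qs_eval_zero m k (by omega)]
      ring
    rw [Polynomial.derivative_mul, Polynomial.derivative_C, mul_zero, add_zero] at hder
    rw [sub_mul, phi_sub, hder, sub_self]
  | succ d ih =>
    intro k r hdk hkm hr
    obtain ⟨k, rfl⟩ := Nat.exists_eq_add_of_lt hdk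
    have hk1 : d + 1 + k + 1 = (d + 1 + k) + 1 := rfl
    rw [hk1] at *
    set K := d + 1 + k with hK
    show phi ((Polynomial.derivative (Qs m K) - Qs m K) * r) = 0
    have hder : phi (Polynomial.derivative (Qs m K * r)) = phi (Qs m K * r) := by
      rw [phi_derivative, Polynomial.eval_mul, Qs_eval_zero m K (by omega)]
      ring
    rw [Polynomial.derivative_mul, phi_add] at hder
    have hrd : (Polynomial.derivative r).natDegree ≤ d := by
      have := Polynomial.natDegree_derivative_le r
      omega
    have h0 : phi (Qs m K * Polynomial.derivative r) = 0 := ih K _ (by omega) (by omega) hrd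
    rw [sub_mul, phi_sub]
    have : phi (Polynomial.derivative (Qs m K) * r) = phi (Qs m K * r) := by
      rw [← hder, h0, add_zero]
    rw [this, sub_self]

lemma Qs_degree (m : ℕ) (hm : 1 ≤ m) :
    ∀ k, (Qs m k).natDegree = m ∧ (Qs m k).leadingCoeff = (-1 : ℝ) ^ k := by
  intro k
  induction k with
  | zero =>
    constructor
    · simp [Qs]
    · simp [Qs, Polynomial.leadingCoeff, Polynomial.natDegree_X_pow]
  | succ k ih =>
    obtain ⟨hdeg, hlead⟩ := ih
    have hne : Qs m k ≠ 0 := fun h => by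
      rw [h] at hlead
      simp only [Polynomial.leadingCoeff_zero] at hlead
      exact (by positivity : (0:ℝ) < |(-1 : ℝ)^k|) |>.ne' (by rw [← hlead]; simp)
    have hdlt : (Polynomial.derivative (Qs m k)).degree < (Qs m k).degree :=
      Polynomial.degree_derivative_lt hne
    have hQ1 : Qs m (k + 1) = Polynomial.derivative (Qs m k) - Qs m k := rfl
    constructor
    · rw [hQ1]
      rw [Polynomial.natDegree_eq_of_degree_eq (Polynomial.degree_sub_eq_right_of_degree_lt hdlt)]
      exact hdeg
    · rw [hQ1, sub_eq_add_neg,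
        Polynomial.leadingCoeff_add_of_degree_lt (by rwa [Polynomial.degree_neg]),
        Polynomial.leadingCoeff_neg, hlead, pow_succ]
      ring

/-- Rodrigues: `(d/dx)^k (x^m e^{-x}) = Qs m k (x) · e^{-x}`. -/
lemma iteratedDeriv_eq_Qs (m : ℕ) : ∀ k (x : ℝ),
    iteratedDeriv k (fun y : ℝ => y ^ m * Real.exp (-y)) x = (Qs m k).eval x * Real.exp (-x) := by
  intro k
  induction k with
  | zero => intro x; simp [Qs]
  | succ k ih =>
    intro x
    rw [iteratedDeriv_succ]
    have hfun : iteratedDeriv k (fun y : ℝ => y ^ m * Real.exp (-y)) =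
        fun y => (Qs m k).eval y * Real.exp (-y) := funext ih
    rw [hfun]
    have hd : HasDerivAt (fun y : ℝ => (Qs m k).eval y * Real.exp (-y))
        ((Polynomial.derivative (Qs m k)).eval x * Real.exp (-x) +
          (Qs m k).eval x * (Real.exp (-x) * (-1))) x :=
      ((Qs m k).hasDerivAt x).mul ((hasDerivAt_neg x).exp)
    rw [hd.deriv]
    show _ = (Polynomial.derivative (Qs m k) - Qs m k).eval x * Real.exp (-x)
    rw [Polynomial.eval_sub]
    ring

/-- The `n`-th Laguerre polynomial via the Rodrigues formula. -/
noncomputable def lag (n : ℕ) (x : ℝ) : ℝ :=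
  ((n.factorial : ℝ))⁻¹ * Real.exp x * iteratedDeriv n (fun y => y ^ n * Real.exp (-y)) x

theorem gauss_laguerre_exactness (n : ℕ) (x : Fin (n + 1) → ℝ) (w : Fin (n + 1) → ℝ)
    (hx : Function.Injective x)
    (hroot : ∀ k, lag (n + 1) (x k) = 0)
    (hw : ∀ j : ℕ, j ≤ n →
      ∑ k : Fin (n + 1), w k * x k ^ j = ∫ t in Set.Ioi (0 : ℝ), Real.exp (-t) * t ^ j) :
    ∀ p : Polynomial ℝ, p.natDegree ≤ 2 * n + 1 →
      ∫ t in Set.Ioi (0 : ℝ), Real.exp (-t) * p.eval t =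
        ∑ k : Fin (n + 1), w k * p.eval (x k) := by
  intro p hp
  obtain ⟨hLdeg, hLlead⟩ := Qs_degree (n + 1) (by omega) (n + 1)
  set L : Polynomial ℝ := Qs (n + 1) (n + 1) with hLdef
  have hlead_ne : L.leadingCoeff ≠ 0 := by
    rw [hLlead]; exact pow_ne_zero _ (by norm_num)
  have hLne : L ≠ 0 := fun h => hlead_ne (by simp [h])
  -- the quadrature nodes are roots of L
  have hLroot : ∀ k, L.eval (x k) = 0 := by
    intro k
    have h := hroot k
    unfold lag at h
    rw [iteratedDeriv_eq_Qs] at h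
    have hf : (((n + 1).factorial : ℝ))⁻¹ ≠ 0 := by positivity
    rcases mul_eq_zero.mp h with h' | h'
    · rcases mul_eq_zero.mp h' with h'' | h''
      · exact absurd h'' hf
      · exact absurd h'' (Real.exp_ne_zero _)
    · rcases mul_eq_zero.mp h' with h'' | h''
      · exact h''
      · exact absurd h'' (Real.exp_ne_zero _)
  set c : ℝ := (L.leadingCoeff)⁻¹ with hc
  set Lm : Polynomial ℝ := L * Polynomial.C c with hLm
  have hmonic : Lm.Monic := Polynomial.monic_mul_leadingCoeff_inv hLne
  have hLmdeg : Lm.natDegree = n + 1 := by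
    rw [Polynomial.natDegree_eq_of_degree_eq (Polynomial.degree_mul_leadingCoeff_inv L hLne),
      hLdeg]
  set q : Polynomial ℝ := p /ₘ Lm with hq
  set r : Polynomial ℝ := p %ₘ Lm with hr
  have hqr : r + Lm * q = p := Polynomial.modByMonic_add_div p Lm
  have hrdeg : r.natDegree ≤ n := by
    have hLm1 : Lm ≠ 1 := fun h => by rw [h] at hLmdeg; simp at hLmdeg
    have h2 := Polynomial.natDegree_modByMonic_lt p hmonic hLm1
    rw [hLmdeg] at h2
    show (p %ₘ Lm).natDegree ≤ n
    omega
  have hqdeg : q.natDegree ≤ n := by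
    have h2 := Polynomial.natDegree_divByMonic p hmonic
    rw [hLmdeg] at h2
    show (p /ₘ Lm).natDegree ≤ n
    omega
  -- orthogonality
  have horth : phi (Lm * q) = 0 := by
    have he : Lm * q = L * (Polynomial.C c * q) := by rw [hLm]; ring
    rw [he]
    exact phi_Qs_mul (n + 1) n (n + 1) _ (by omega) le_rfl
      (le_trans (Polynomial.natDegree_C_mul_le c q) hqdeg)
  -- exactness on degree ≤ n from the moment hypothesis
  have key : ∀ s : Polynomial ℝ, s.natDegree ≤ n →
      phi s = ∑ k : Fin (n + 1), w k * s.eval (x k) := by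
    intro s hs
    rw [phi_eq_sum' (Nat.lt_succ_of_le hs)]
    have h1 : ∀ i ∈ Finset.range (n + 1), s.coeff i * (i.factorial : ℝ)
        = ∑ k : Fin (n + 1), s.coeff i * (w k * x k ^ i) := by
      intro i hi
      rw [← Finset.mul_sum, hw i (by simpa using Nat.lt_succ_iff.mp (Finset.mem_range.mp hi)),
        moment]
    rw [Finset.sum_congr rfl h1, Finset.sum_comm]
    refine Finset.sum_congr rfl fun k _ => ?_
    rw [Polynomial.eval_eq_sum_range' (Nat.lt_succ_of_le hs) (x k), Finset.mul_sum]
    exact Finset.sum_congr rfl fun i _ => by ring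
  have hphi : phi p = ∑ k : Fin (n + 1), w k * p.eval (x k) := by
    rw [← hqr, phi_add, horth, add_zero, key r hrdeg]
    refine Finset.sum_congr rfl fun k _ => ?_
    rw [Polynomial.eval_add, Polynomial.eval_mul, hLm, Polynomial.eval_mul, hLroot k]
    ring
  exact hphi
end

section
/- Let σ : [t_n, t_f] → (0,∞) be continuous and positive, c : [t_n, t_f] → ℝ continuous, x(t) = ∫_{t_n}^t σ(s) ds, and T(t) = exp(−x(t)). Then the volume rendering integral satisfies the change of variables ∫_{t_n}^{t_f} T(t) σ(t) c(t) dt = ∫_0^{x(t_f)} e^{-x} c(t(x)) dx, where t(x) is the inverse function of x(t). -/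
open Set intervalIntegral

theorem volume_rendering_change_of_variables (tn tf : ℝ) (htf : tn ≤ tf)
    (σ c : ℝ → ℝ)
    (hσc : ContinuousOn σ (Set.Icc tn tf))
    (hσpos : ∀ t ∈ Set.Icc tn tf, 0 < σ t)
    (hcc : ContinuousOn c (Set.Icc tn tf))
    (τ : ℝ → ℝ)
    (hτ : ∀ t ∈ Set.Icc tn tf, τ (∫ s in tn..t, σ s) = t) :
    ∫ t in tn..tf, Real.exp (-(∫ s in tn..t, σ s)) * σ t * c t =
      ∫ y in (0 : ℝ)..(∫ s in tn..tf, σ s), Real.exp (-y) * c (τ y) := by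
  set x : ℝ → ℝ := fun t => ∫ s in tn..t, σ s with hxdef
  have huIcc : Set.uIcc tn tf = Set.Icc tn tf := Set.uIcc_of_le htf
  -- interval integrability of σ between points of Icc
  have hσii : ∀ t1 ∈ Set.Icc tn tf, ∀ t2 ∈ Set.Icc tn tf,
      IntervalIntegrable σ MeasureTheory.volume t1 t2 := by
    intro t1 h1 t2 h2
    exact (hσc.mono (Set.uIcc_subset_Icc h1 h2)).intervalIntegrable
  -- continuity of x on Icc
  have hxcont : ContinuousOn x (Set.Icc tn tf) := by
    have := intervalIntegral.continuousOn_primitive_interval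
      (f := σ) (a := tn) (b := tf) (μ := MeasureTheory.volume)
      (by rw [huIcc]; exact hσc.integrableOn_Icc)
    rwa [huIcc] at this
  -- strict monotonicity of x on Icc
  have hmono : StrictMonoOn x (Set.Icc tn tf) := by
    intro t1 h1 t2 h2 h12
    have hadd : x t1 + ∫ s in t1..t2, σ s = x t2 :=
      intervalIntegral.integral_add_adjacent_intervals
        (hσii tn (Set.left_mem_Icc.2 htf) t1 h1) (hσii t1 h1 t2 h2)
    have hpos : 0 < ∫ s in t1..t2, σ s := by
      apply intervalIntegral.intervalIntegral_pos_of_pos_on (hσii t1 h1 t2 h2) _ h12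
      intro s hs
      exact hσpos s ⟨h1.1.trans hs.1.le, hs.2.le.trans h2.2⟩
    linarith
  have hxtn : x tn = 0 := intervalIntegral.integral_same
  -- image of Icc under x
  have himg : x '' Set.Icc tn tf = Set.Icc 0 (x tf) := by
    apply Set.Subset.antisymm
    · rintro _ ⟨t, ht, rfl⟩
      refine ⟨?_, ?_⟩
      · rw [← hxtn]
        exact hmono.monotoneOn (Set.left_mem_Icc.2 htf) ht ht.1
      · exact hmono.monotoneOn ht (Set.right_mem_Icc.2 htf) ht.2
    · have := intermediate_value_Icc htf hxcont
      rwa [hxtn] at this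
  -- derivative of x from the right on Ioo
  have hd : ∀ t ∈ Set.Ioo tn tf, HasDerivWithinAt x (σ t) (Set.Ioi t) t := by
    intro t ht
    have hmem : Set.Icc tn tf ∈ nhds t := Icc_mem_nhds ht.1 ht.2
    have hca : ContinuousAt σ t := hσc.continuousAt hmem
    have hmeas : StronglyMeasurableAtFilter σ (nhds t) :=
      ⟨Set.Icc tn tf, hmem, hσc.aestronglyMeasurable measurableSet_Icc⟩
    exact (intervalIntegral.integral_hasDerivAt_right
      (hσii tn (Set.left_mem_Icc.2 htf) t (Set.Ioo_subset_Icc_self ht))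
      hmeas hca).hasDerivWithinAt
  -- order isomorphism and continuity of τ on the image
  haveI : Set.OrdConnected (x '' Set.Icc tn tf) := himg ▸ Set.ordConnected_Icc
  let e : Set.Icc tn tf ≃o (x '' Set.Icc tn tf) := StrictMonoOn.orderIso x _ hmono
  have hτeq : ∀ y : x '' Set.Icc tn tf, τ (y : ℝ) = ((e.symm y : Set.Icc tn tf) : ℝ) := by
    intro y
    obtain ⟨t, ht, hxt⟩ := y.2
    have he : e ⟨t, ht⟩ = y := Subtype.ext hxt
    have hsymm : e.symm y = ⟨t, ht⟩ := by rw [← he, OrderIso.symm_apply_apply]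
    rw [hsymm, ← hxt]
    exact hτ t ht
  have hτcont : ContinuousOn τ (x '' Set.Icc tn tf) := by
    rw [continuousOn_iff_continuous_restrict]
    have hres : (x '' Set.Icc tn tf).domRestrict τ
        = fun y => ((e.symm y : Set.Icc tn tf) : ℝ) := funext fun y => hτeq y
    rw [hres]
    exact continuous_subtype_val.comp e.symm.continuous
  have hτmaps : Set.MapsTo τ (x '' Set.Icc tn tf) (Set.Icc tn tf) := by
    rintro _ ⟨t, ht, rfl⟩
    rw [hτ t ht]; exact ht
  -- continuity of g on the image
  set g : ℝ → ℝ := fun y => Real.exp (-y) * c (τ y) with hgdef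
  have hg : ContinuousOn g (x '' Set.Icc tn tf) :=
    ((Real.continuous_exp.comp continuous_neg).continuousOn).mul (hcc.comp hτcont hτmaps)
  -- apply change of variables
  have key : (∫ t in tn..tf, (g ∘ x) t * σ t) = ∫ u in x tn..x tf, g u := by
    apply intervalIntegral.integral_comp_mul_deriv'' (f := x) (f' := σ) (g := g)
    · rwa [huIcc]
    · rwa [min_eq_left htf, max_eq_right htf]
    · rwa [huIcc]
    · rwa [huIcc]
  have hLHS : (∫ t in tn..tf, Real.exp (-(∫ s in tn..t, σ s)) * σ t * c t)
      = ∫ t in tn..tf, (g ∘ x) t * σ t := by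
    apply intervalIntegral.integral_congr
    intro t ht
    rw [huIcc] at ht
    simp only [Function.comp, hgdef, hxdef]
    rw [hτ t ht]
    ring
  rw [hLHS, key, hxtn]
end
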